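/- Let T > 0, let β : [0,T] → (0,∞) be continuous, let η ≥ 0 and let L : [0,T] → ℝ be continuous. Define M(t) := max(η, sup_{v ∈ [0,t]} L(v)·exp(∫_0^v β(s) ds)) for t ∈ [0,T]; M is nondecreasing and continuous except possibly for a jump of size (L(0)−η)⁺ at t = 0 when extended by M(t) := η for t < 0. Let μ_M be the Lebesgue–Stieltjes measure of this extension restricted to [0,T], and define the finite Borel measure ν on [0,T] by dν(s) := (β(s)·exp(∫_0^s β(u) du))^{-1} dμ_M(s). Then for every t ∈ [0,T]: η·exp(−∫_0^t β(s) ds) + ∫_{[0,t]} β(s)·exp(−∫_s^t β(u) du) dν(s) = exp(−∫_0^t β(s) ds)·M(t), and this quantity is greater than or equal to L(t). -/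

import Mathlib

open MeasureTheory

/-- Let T > 0, β : [0,T] → (0,∞) continuous, η ≥ 0, L : [0,T] → ℝ continuous.
Define M(t) := max(η, sup_{v ∈ [0,t]} L(v)·exp(∫_0^v β(s) ds)) for t ∈ [0,T]; M is
nondecreasing and continuous except possibly for a jump at t = 0 when extended by M(t) := η
for t < 0. Let μ_M be the Lebesgue–Stieltjes measure of this extension restricted to [0,T]
(modelled by a Stieltjes function f agreeing with the extension of M on (−∞,0) ∪ [0,T]),
and define the finite Borel measure ν on [0,T] by
dν(s) := (β(s)·exp(∫_0^s β(u) du))^{-1} dμ_M(s). Then for every t ∈ [0,T]: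
η·exp(−∫_0^t β(s) ds) + ∫_{[0,t]} β(s)·exp(−∫_s^t β(u) du) dν(s)
  = exp(−∫_0^t β(s) ds)·M(t), and this quantity is ≥ L(t). -/
theorem stmt_12 (T : ℝ) (hT : 0 < T) (β : ℝ → ℝ)
    (hβc : ContinuousOn β (Set.Icc 0 T)) (hβpos : ∀ s ∈ Set.Icc 0 T, 0 < β s)
    (η : ℝ) (hη : 0 ≤ η) (L : ℝ → ℝ) (hL : ContinuousOn L (Set.Icc 0 T))
    (M : ℝ → ℝ)
    (hM : ∀ t ∈ Set.Icc 0 T,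
      M t = max η (sSup ((fun v => L v * Real.exp (∫ s in (0 : ℝ)..v, β s)) '' Set.Icc 0 t)))
    (f : StieltjesFunction ℝ)
    (hf_neg : ∀ t < (0 : ℝ), f t = η)
    (hf_pos : ∀ t ∈ Set.Icc 0 T, f t = M t) :
    ∀ t ∈ Set.Icc 0 T,
      η * Real.exp (-∫ s in (0 : ℝ)..t, β s) +
        ∫ s in Set.Icc 0 t, β s * Real.exp (-∫ u in s..t, β u)
          ∂((f.measure.restrict (Set.Icc 0 T)).withDensity
              (fun s => ENNReal.ofReal ((β s * Real.exp (∫ u in (0 : ℝ)..s, β u))⁻¹)))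
        = Real.exp (-∫ s in (0 : ℝ)..t, β s) * M t ∧
      L t ≤ Real.exp (-∫ s in (0 : ℝ)..t, β s) * M t := by
  intro t ht
  obtain ⟨ht0, htT⟩ := ht
  set F : ℝ → ℝ := fun s => ∫ u in (0 : ℝ)..s, β u with hFdef
  have hsub : Set.Icc (0 : ℝ) t ⊆ Set.Icc 0 T := Set.Icc_subset_Icc_right htT
  -- integrability of β on subintervals
  have hβint : ∀ a b, a ∈ Set.Icc (0:ℝ) T → b ∈ Set.Icc (0:ℝ) T →
      IntervalIntegrable β volume a b := by
    intro a b ha hb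
    exact (hβc.mono (Set.uIcc_subset_Icc ha hb)).intervalIntegrable
  -- continuity of the primitive F on [0,T]
  have hFc : ContinuousOn F (Set.Icc 0 T) := by
    have h0T : Set.uIcc (0:ℝ) T = Set.Icc 0 T := Set.uIcc_of_le hT.le
    have : IntegrableOn β (Set.uIcc (0:ℝ) T) volume := by
      rw [h0T]; exact hβc.integrableOn_Icc
    have := intervalIntegral.continuousOn_primitive_interval this
    rwa [h0T] at this
  -- M t ≥ η and M t ≥ L t * exp (F t)
  have hMt : M t = max η (sSup ((fun v => L v * Real.exp (F v)) '' Set.Icc 0 t)) :=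
    hM t ⟨ht0, htT⟩
  have hcont : ContinuousOn (fun v => L v * Real.exp (F v)) (Set.Icc 0 t) :=
    (hL.mono hsub).mul (Real.continuous_exp.comp_continuousOn (hFc.mono hsub))
  have hbdd : BddAbove ((fun v => L v * Real.exp (F v)) '' Set.Icc 0 t) :=
    (isCompact_Icc.image_of_continuousOn hcont).bddAbove
  have hmem : L t * Real.exp (F t) ∈ (fun v => L v * Real.exp (F v)) '' Set.Icc 0 t :=
    ⟨t, ⟨ht0, le_refl t⟩, rfl⟩
  have hLM : L t * Real.exp (F t) ≤ M t := by
    rw [hMt]; exact le_trans (le_csSup hbdd hmem) (le_max_right _ _)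
  have hηM : η ≤ M t := by rw [hMt]; exact le_max_left _ _
  -- leftLim f 0 = η
  have hll : Function.leftLim f 0 = η := by
    have htend : Filter.Tendsto f (nhdsWithin (0:ℝ) (Set.Iio 0)) (nhds η) := by
      apply Filter.Tendsto.congr' _ (tendsto_const_nhds : Filter.Tendsto (fun _ : ℝ => η) _ _)
      filter_upwards [self_mem_nhdsWithin] with x hx
      exact (hf_neg x hx).symm
    exact leftLim_eq_of_tendsto htend
  -- the measure of [0,t]
  have hmeas : f.measure (Set.Icc 0 t) = ENNReal.ofReal (M t - η) := by
    rw [StieltjesFunction.measure_Icc, hll, hf_pos t ⟨ht0, htT⟩]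
  -- rewrite the density as an ℝ≥0-valued one
  have hdens_eq : (fun s => ENNReal.ofReal ((β s * Real.exp (F s))⁻¹)) =
      (fun s => (((β s * Real.exp (F s))⁻¹).toNNReal : ENNReal)) := rfl
  have hdens_c : ContinuousOn (fun s => ((β s * Real.exp (F s))⁻¹).toNNReal) (Set.Icc 0 t) := by
    apply continuous_real_toNNReal.comp_continuousOn
    apply ContinuousOn.inv₀
    · exact (hβc.mono hsub).mul (Real.continuous_exp.comp_continuousOn (hFc.mono hsub))
    · intro s hs
      exact ne_of_gt (mul_pos (hβpos s (hsub hs)) (Real.exp_pos _))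
  have hdens_aem : AEMeasurable (fun s => ((β s * Real.exp (F s))⁻¹).toNNReal)
      ((f.measure.restrict (Set.Icc 0 T)).restrict (Set.Icc 0 t)) :=
    hdens_c.aemeasurable measurableSet_Icc
  -- compute the integral
  have hint : (∫ s in Set.Icc 0 t, β s * Real.exp (-∫ u in s..t, β u)
          ∂((f.measure.restrict (Set.Icc 0 T)).withDensity
              (fun s => ENNReal.ofReal ((β s * Real.exp (F s))⁻¹))))
      = (M t - η) * Real.exp (-F t) := by
    rw [hdens_eq,
      setIntegral_withDensity_eq_setIntegral_smul₀ hdens_aem _ measurableSet_Icc,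
      Measure.restrict_restrict measurableSet_Icc, Set.inter_eq_left.mpr hsub]
    have hEq : Set.EqOn
        (fun s => ((β s * Real.exp (F s))⁻¹).toNNReal • (β s * Real.exp (-∫ u in s..t, β u)))
        (fun _ => Real.exp (-F t)) (Set.Icc 0 t) := by
      intro s hs
      have hβs : 0 < β s := hβpos s (hsub hs)
      have hadd : F s + ∫ u in s..t, β u = F t :=
        intervalIntegral.integral_add_adjacent_intervals
          (hβint 0 s (hsub ⟨le_refl 0, hs.1.trans hs.2⟩) (hsub hs))
          (hβint s t (hsub hs) ⟨ht0, htT⟩)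
      have hexp : Real.exp (-∫ u in s..t, β u) = Real.exp (F s) * Real.exp (-F t) := by
        rw [← Real.exp_add]; congr 1; linarith
      have hpos : (0:ℝ) ≤ (β s * Real.exp (F s))⁻¹ :=
        le_of_lt (inv_pos.2 (mul_pos hβs (Real.exp_pos _)))
      simp only [NNReal.smul_def, Real.coe_toNNReal _ hpos, smul_eq_mul]
      rw [hexp]
      field_simp
    rw [setIntegral_congr_fun measurableSet_Icc hEq, setIntegral_const, measureReal_def, hmeas,
      ENNReal.toReal_ofReal (by linarith), smul_eq_mul]
  constructor
  · rw [hint]; ring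
  · calc L t = L t * Real.exp (F t) * Real.exp (-F t) := by
          rw [mul_assoc, ← Real.exp_add, add_neg_cancel, Real.exp_zero, mul_one]
      _ ≤ M t * Real.exp (-F t) :=
          mul_le_mul_of_nonneg_right hLM (le_of_lt (Real.exp_pos _))
      _ = Real.exp (-F t) * M t := mul_comm _ _
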